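/- Let k > 0, F ≥ 0, and 0 ≤ α ≤ 1/e be real numbers. Then the function s ↦ (1 − α·exp((k−s)/k))·F/s is antitone (non-increasing) on the interval (0, k]. -/

import Mathlib

open Real Set

private lemma key_ineq (k α : ℝ) (hk : 0 < k) (hα0 : 0 ≤ α)
    (hα1 : α ≤ 1 / Real.exp 1) {s : ℝ} (hs : 0 < s) :
    α * Real.exp ((k - s) / k) * (s / k + 1) ≤ 1 := by
  have h1 : α * Real.exp ((k - s) / k) ≤ Real.exp (-(s / k)) := by
    have : (1 / Real.exp 1) * Real.exp ((k - s) / k) = Real.exp ((k - s) / k - 1) := by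
      rw [Real.exp_sub]; ring
    calc α * Real.exp ((k - s) / k)
        ≤ (1 / Real.exp 1) * Real.exp ((k - s) / k) := by
          apply mul_le_mul_of_nonneg_right hα1 (Real.exp_pos _).le
      _ = Real.exp ((k - s) / k - 1) := this
      _ = Real.exp (-(s / k)) := by
          congr 1; field_simp; ring
  have h2 : s / k + 1 ≤ Real.exp (s / k) := by
    have := Real.add_one_le_exp (s / k); linarith
  have hpos : 0 < s / k + 1 := by positivity
  calc α * Real.exp ((k - s) / k) * (s / k + 1)
      ≤ Real.exp (-(s / k)) * Real.exp (s / k) := by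
        apply mul_le_mul h1 h2 hpos.le (Real.exp_pos _).le
    _ = 1 := by rw [← Real.exp_add]; simp

/-- Monotonicity of the τ⁺-threshold level: for `k > 0`, `F ≥ 0` and `0 ≤ α ≤ 1/e`,
the function `s ↦ (1 − α e^{(k−s)/k}) F / s` is antitone on `(0, k]`. -/
theorem threshold_antitone (k F α : ℝ) (hk : 0 < k) (hF : 0 ≤ F)
    (hα0 : 0 ≤ α) (hα1 : α ≤ 1 / Real.exp 1) :
    AntitoneOn (fun s : ℝ => (1 - α * Real.exp ((k - s) / k)) * F / s) (Set.Ioc 0 k) := by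
  have hderiv : ∀ s ∈ Set.Ioo (0:ℝ) k,
      HasDerivAt (fun s : ℝ => (1 - α * Real.exp ((k - s) / k)) * F / s)
        ((α * Real.exp ((k - s) / k) / k * F * s
          - (1 - α * Real.exp ((k - s) / k)) * F) / s ^ 2) s := by
    intro s hs
    have hsne : s ≠ 0 := ne_of_gt hs.1
    have h1 : HasDerivAt (fun s : ℝ => (k - s) / k) (-1 / k) s :=
      ((hasDerivAt_id s).const_sub k).div_const k
    have h2 : HasDerivAt (fun s : ℝ => Real.exp ((k - s) / k))
        (Real.exp ((k - s) / k) * (-1 / k)) s := h1.exp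
    have h3 : HasDerivAt (fun s : ℝ => (1 - α * Real.exp ((k - s) / k)) * F)
        (-(α * (Real.exp ((k - s) / k) * (-1 / k))) * F) s :=
      ((h2.const_mul α).const_sub 1).mul_const F
    have h4 := h3.div (hasDerivAt_id s) hsne
    refine h4.congr_deriv ?_
    simp only [id_eq]; ring
  apply antitoneOn_of_deriv_nonpos (convex_Ioc 0 k)
  · apply ContinuousOn.div
    · apply ContinuousOn.mul _ continuousOn_const
      apply ContinuousOn.sub continuousOn_const
      exact (continuousOn_const.mul (((continuousOn_const.sub continuousOn_id).div_const k).rexp))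
    · exact continuousOn_id
    · intro x hx; exact ne_of_gt hx.1
  · intro s hs
    rw [interior_Ioc] at hs
    exact (hderiv s hs).differentiableAt.differentiableWithinAt
  · intro s hs
    rw [interior_Ioc] at hs
    rw [(hderiv s hs).deriv]
    have hs0 := hs.1
    have key := key_ineq k α hk hα0 hα1 hs0
    apply div_nonpos_of_nonpos_of_nonneg _ (sq_nonneg s)
    have : α * Real.exp ((k - s) / k) / k * F * s - (1 - α * Real.exp ((k - s) / k)) * F
        = F * (α * Real.exp ((k - s) / k) * (s / k + 1) - 1) := by
      field_simp; ring
    rw [this]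
    exact mul_nonpos_of_nonneg_of_nonpos hF (by linarith)
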